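/- The operators s_1,...,s_{n-1}, s_n^d on the skew-polynomial ring Pol_n^- satisfy the type D_n Coxeter relations: (s_n^d)^2 = 1, s_i s_n^d = s_n^d s_i for i ≠ n-2, and s_n^d s_{n-2} s_n^d = s_{n-2} s_n^d s_{n-2}. -/
import Mathlib


/-- The operators `s_1, ..., s_{n-1}, sₙᵈ` on the skew-polynomial ring satisfy the
type `D_n` Coxeter relations. Here the ring has `n + 3` generators; `s i` corresponds
to the simple transposition `s_{i+1}` and `sd` to `s_{n+3}^d` of the paper, and
`s ⟨n, _⟩` is the paper's `s_{n-2}` (i.e. `s_{(n+3)-2}`). -/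
theorem stmt_7 (n : ℕ) (R : Type*) [Ring R] (x : Fin (n + 3) → R)
    (hx : ∀ a b, a ≠ b → x a * x b + x b * x a = 0)
    (hgen : Subring.closure (Set.range x) = ⊤)
    (s : Fin (n + 2) → R →+* R)
    (hsA : ∀ i : Fin (n + 2), s i (x i.castSucc) = - x i.succ ∧
      s i (x i.succ) = - x i.castSucc ∧
      ∀ j, j ≠ i.castSucc → j ≠ i.succ → s i (x j) = - x j)
    (sd : R →+* R)
    (hsd1 : sd (x (Fin.last (n + 2))) = x ((Fin.last (n + 1)).castSucc))
    (hsd2 : sd (x ((Fin.last (n + 1)).castSucc)) = x (Fin.last (n + 2)))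
    (hsd3 : ∀ j, j ≠ Fin.last (n + 2) → j ≠ (Fin.last (n + 1)).castSucc → sd (x j) = - x j) :
    sd.comp sd = RingHom.id R ∧
    (∀ i : Fin (n + 2), i ≠ ⟨n, by omega⟩ → (s i).comp sd = sd.comp (s i)) ∧
    sd.comp ((s ⟨n, by omega⟩).comp sd) = (s ⟨n, by omega⟩).comp (sd.comp (s ⟨n, by omega⟩)) := by
  have hext : ∀ f g : R →+* R, (∀ j, f (x j) = g (x j)) → f = g := by
    intro f g h
    have hle : Subring.closure (Set.range x) ≤ RingHom.eqLocus f g :=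
      Subring.closure_le.2 (by rintro _ ⟨j, rfl⟩; exact h j)
    exact RingHom.ext fun r => hle (by rw [hgen]; trivial)
  refine ⟨?_, ?_, ?_⟩
  · apply hext; intro j
    simp only [RingHom.comp_apply, RingHom.id_apply]
    rcases eq_or_ne j (Fin.last (n + 2)) with rfl | hjL
    · rw [hsd1, hsd2]
    rcases eq_or_ne j ((Fin.last (n + 1)).castSucc) with rfl | hjc
    · rw [hsd2, hsd1]
    · simp [hsd3 j hjL hjc]
  · intro i hi
    obtain ⟨h1, h2, h3⟩ := hsA i
    have hival : i.val ≠ n := fun h => hi (Fin.ext h)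
    have hilt : i.val < n + 2 := i.isLt
    apply hext; intro j
    simp only [RingHom.comp_apply]
    rcases Nat.lt_or_ge i.val n with hlt | hge
    · -- i.castSucc and i.succ are both different from c and L
      have hcsL : i.castSucc ≠ Fin.last (n + 2) := by
        intro h; apply_fun Fin.val at h; simp at h; omega
      have hcsc : i.castSucc ≠ (Fin.last (n + 1)).castSucc := by
        intro h; apply_fun Fin.val at h; simp at h; omega
      have hsL : i.succ ≠ Fin.last (n + 2) := by
        intro h; apply_fun Fin.val at h; simp at h; omega
      have hsc : i.succ ≠ (Fin.last (n + 1)).castSucc := by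
        intro h; apply_fun Fin.val at h; simp at h; omega
      rcases eq_or_ne j i.castSucc with rfl | hj1
      · simp [hsd3 _ hcsL hcsc, hsd3 _ hsL hsc, h1]
      rcases eq_or_ne j i.succ with rfl | hj2
      · simp [hsd3 _ hcsL hcsc, hsd3 _ hsL hsc, h2]
      rcases eq_or_ne j (Fin.last (n + 2)) with rfl | hjL
      · simp [hsd1, h3 _ hcsc.symm hsc.symm, h3 _ hcsL.symm hsL.symm]
      rcases eq_or_ne j ((Fin.last (n + 1)).castSucc) with rfl | hjc
      · simp [hsd1, hsd2, h3 _ hcsc.symm hsc.symm, h3 _ hcsL.symm hsL.symm]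
      · simp [hsd3 _ hjL hjc, h3 _ hj1 hj2]
    · -- i.val = n + 1, so i.castSucc = c and i.succ = L
      have hieq : i.val = n + 1 := by omega
      have hcs : i.castSucc = (Fin.last (n + 1)).castSucc := by
        apply Fin.ext; simp [hieq]
      have hs : i.succ = Fin.last (n + 2) := by
        apply Fin.ext; simp [Fin.val_succ, hieq]
      simp only [hcs, hs] at h1 h2 h3
      rcases eq_or_ne j ((Fin.last (n + 1)).castSucc) with rfl | hjc
      · simp [hsd1, hsd2, h1, h2]
      rcases eq_or_ne j (Fin.last (n + 2)) with rfl | hjL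
      · simp [hsd1, hsd2, h1, h2]
      · simp [hsd3 _ hjL hjc, h3 _ hjc hjL]
  · obtain ⟨h1, h2, h3⟩ := hsA ⟨n, by omega⟩
    have hms : (⟨n, by omega⟩ : Fin (n + 2)).succ = (Fin.last (n + 1)).castSucc := by
      apply Fin.ext; simp
    simp only [hms] at h1 h2 h3
    have h1' : (s ⟨n, by omega⟩) (x (⟨n, by omega⟩ : Fin (n + 3))) =
        -x ((Fin.last (n + 1)).castSucc) := h1
    have h2' : (s ⟨n, by omega⟩) (x ((Fin.last (n + 1)).castSucc)) =
        -x (⟨n, by omega⟩ : Fin (n + 3)) := h2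
    have hmcsL : (⟨n, by omega⟩ : Fin (n + 2)).castSucc ≠ Fin.last (n + 2) := by
      intro h; apply_fun Fin.val at h; simp at h
    have hmcsc : (⟨n, by omega⟩ : Fin (n + 2)).castSucc ≠ (Fin.last (n + 1)).castSucc := by
      intro h; apply_fun Fin.val at h; simp at h
    have hcL : ((Fin.last (n + 1)).castSucc : Fin (n + 3)) ≠ Fin.last (n + 2) := by
      intro h; apply_fun Fin.val at h; simp at h
    have hsdm : sd (x (⟨n, by omega⟩ : Fin (n + 3))) = -x (⟨n, by omega⟩ : Fin (n + 3)) :=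
      hsd3 _ hmcsL hmcsc
    have hL3 : (s ⟨n, by omega⟩) (x (Fin.last (n + 2))) = -x (Fin.last (n + 2)) :=
      h3 _ hmcsL.symm hcL.symm
    apply hext; intro j
    simp only [RingHom.comp_apply]
    rcases eq_or_ne j ((⟨n, by omega⟩ : Fin (n + 2)).castSucc) with rfl | hj1
    · simp [hsdm, h1', h2', hsd1, hsd2, hL3]
    rcases eq_or_ne j ((Fin.last (n + 1)).castSucc) with rfl | hjc
    · simp [hsdm, h1', h2', hsd1, hsd2, hL3]
    rcases eq_or_ne j (Fin.last (n + 2)) with rfl | hjL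
    · simp [hsdm, h1', h2', hsd1, hsd2, hL3]
    · simp [hsd3 _ hjL hjc, h3 _ hj1 hjc]
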